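/- arXiv:2605.04419 — 2 statements merged into one kernel-verified Lean document; each statement's English description precedes it below -/
import Mathlib

section
/- Let n ≥ 1 be an integer, let φ_0, …, φ_k ∈ ℝ^n, let y_0, …, y_k ∈ ℝ, let λ_0, …, λ_k ∈ (0,1], define ρ_i = ∏_{j=0}^{i} λ_j^{-1}, let P_0 ∈ ℝ^{n×n} be symmetric positive definite, and let θ_0 ∈ ℝ^n. Define recursively, for 0 ≤ i ≤ k, L_i = λ_i^{-1} P_i, P_{i+1} = L_i − (1/(1 + φ_iᵀ L_i φ_i)) L_i φ_i φ_iᵀ L_i, and θ_{i+1} = θ_i + P_{i+1} φ_i (y_i − θ_iᵀ φ_i). Then θ_{k+1} is the unique global minimizer of the cost J_k(θ̂) = ∑_{i=0}^{k} (ρ_i/ρ_k) (y_i − θ̂ᵀ φ_i)² + (1/ρ_k) (θ̂ − θ_0)ᵀ P_0^{-1} (θ̂ − θ_0). -/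
open Matrix Finset

section Helpers

variable {n : ℕ}

lemma vecMulVec_mulVec' (a b x : Fin n → ℝ) :
    Matrix.vecMulVec a b *ᵥ x = (b ⬝ᵥ x) • a := by
  ext i
  simp only [Matrix.mulVec, Matrix.vecMulVec_apply, dotProduct, Pi.smul_apply, smul_eq_mul,
    Finset.sum_mul]
  exact Finset.sum_congr rfl fun j _ => by ring

lemma vecMul_vecMulVec' (u a b : Fin n → ℝ) :
    u ᵥ* Matrix.vecMulVec a b = (u ⬝ᵥ a) • b := by
  ext j
  simp only [Matrix.vecMul, Matrix.vecMulVec_apply, dotProduct, Pi.smul_apply, smul_eq_mul,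
    Finset.sum_mul]
  exact Finset.sum_congr rfl fun i _ => by ring

lemma mul_vecMulVec' (M : Matrix (Fin n) (Fin n) ℝ) (a b : Fin n → ℝ) :
    M * Matrix.vecMulVec a b = Matrix.vecMulVec (M *ᵥ a) b := by
  ext i j
  simp [Matrix.mul_apply, Matrix.vecMulVec_apply, Matrix.mulVec, dotProduct, Finset.sum_mul,
    mul_assoc]

lemma vecMulVec_mul' (M : Matrix (Fin n) (Fin n) ℝ) (a b : Fin n → ℝ) :
    Matrix.vecMulVec a b * M = Matrix.vecMulVec a (b ᵥ* M) := by
  ext i j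
  simp [Matrix.mul_apply, Matrix.vecMulVec_apply, Matrix.vecMul, dotProduct, Finset.mul_sum,
    mul_assoc]

lemma vecMulVec_smul_right' (a : Fin n → ℝ) (r : ℝ) (b : Fin n → ℝ) :
    Matrix.vecMulVec a (r • b) = r • Matrix.vecMulVec a b := by
  ext i j
  simp [Matrix.vecMulVec_apply, mul_comm, mul_assoc, mul_left_comm]

lemma posSemidef_vecMulVec_self' (v : Fin n → ℝ) : (Matrix.vecMulVec v v).PosSemidef := by
  refine Matrix.PosSemidef.of_dotProduct_mulVec_nonneg ?_ ?_
  · ext i j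
    simp [Matrix.vecMulVec_apply, Matrix.conjTranspose_apply, mul_comm]
  · intro x
    rw [vecMulVec_mulVec']
    have : star x ⬝ᵥ (v ⬝ᵥ x) • v = (v ⬝ᵥ x) * (v ⬝ᵥ x) := by
      simp [dotProduct_smul, star_trivial, dotProduct_comm x v, mul_comm]
    rw [this]
    exact mul_self_nonneg _

lemma posDef_smul' {M : Matrix (Fin n) (Fin n) ℝ} (hM : M.PosDef) {c : ℝ} (hc : 0 < c) :
    (c • M).PosDef := by
  refine Matrix.PosDef.of_dotProduct_mulVec_pos ?_ ?_
  · ext i j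
    have := hM.1
    rw [Matrix.IsHermitian] at this
    simp [Matrix.conjTranspose_apply, Matrix.smul_apply]
    nth_rewrite 1 [← this]
    simp [Matrix.conjTranspose_apply]
  · intro x hx
    rw [Matrix.smul_mulVec, dotProduct_smul]
    exact mul_pos hc (hM.dotProduct_mulVec_pos hx)

lemma posSemidef_smul' {M : Matrix (Fin n) (Fin n) ℝ} (hM : M.PosSemidef) {c : ℝ} (hc : 0 ≤ c) :
    (c • M).PosSemidef := by
  refine Matrix.PosSemidef.of_dotProduct_mulVec_nonneg ?_ ?_
  · ext i j
    have := hM.1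
    rw [Matrix.IsHermitian] at this
    simp [Matrix.conjTranspose_apply, Matrix.smul_apply]
    nth_rewrite 1 [← this]
    simp [Matrix.conjTranspose_apply]
  · intro x
    rw [Matrix.smul_mulVec, dotProduct_smul]
    exact mul_nonneg hc (hM.dotProduct_mulVec_nonneg x)

lemma posSemidef_sum' {s : Finset ℕ} {f : ℕ → Matrix (Fin n) (Fin n) ℝ}
    (h : ∀ i ∈ s, (f i).PosSemidef) : (∑ i ∈ s, f i).PosSemidef := by
  classical
  induction s using Finset.induction_on with
  | empty => simpa using Matrix.PosSemidef.zero
  | insert _ _ hns ih =>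
    rw [Finset.sum_insert hns]
    exact (h _ (Finset.mem_insert_self _ _)).add
      (ih fun i hi => h i (Finset.mem_insert_of_mem hi))

lemma sum_mulVec' {s : Finset ℕ} (f : ℕ → Matrix (Fin n) (Fin n) ℝ) (x : Fin n → ℝ) :
    (∑ i ∈ s, f i) *ᵥ x = ∑ i ∈ s, f i *ᵥ x := by
  classical
  induction s using Finset.induction_on with
  | empty => simp
  | insert _ _ hns ih => simp [Finset.sum_insert hns, Matrix.add_mulVec, ih]

lemma dotProduct_sum' {s : Finset ℕ} (v : Fin n → ℝ) (f : ℕ → Fin n → ℝ) :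
    v ⬝ᵥ (∑ i ∈ s, f i) = ∑ i ∈ s, v ⬝ᵥ f i := by
  classical
  induction s using Finset.induction_on with
  | empty => simp
  | insert _ _ hns ih => simp [Finset.sum_insert hns, dotProduct_add, ih]

lemma sym_dot' {Q : Matrix (Fin n) (Fin n) ℝ} (hQ : Q.IsHermitian) (u v : Fin n → ℝ) :
    u ⬝ᵥ (Q *ᵥ v) = v ⬝ᵥ (Q *ᵥ u) := by
  have hQt : Qᵀ = Q := by
    rw [← Matrix.conjTranspose_eq_transpose_of_trivial]; exact hQ
  rw [dotProduct_mulVec, ← Matrix.vecMul_transpose, hQt, dotProduct_comm,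
    ← Matrix.mulVec_transpose, hQt]

end Helpers

/-- The RLS recursion (with variable-rate forgetting) produces the unique
global minimizer of the RLS cumulative cost. -/
theorem rls_recursion_minimizes_cost
    (n : ℕ) (hn : 1 ≤ n) (k : ℕ)
    (φ : ℕ → Fin n → ℝ) (y : ℕ → ℝ) (lam : ℕ → ℝ)
    (hlam : ∀ i, i ≤ k → lam i ∈ Set.Ioc (0 : ℝ) 1)
    (ρ : ℕ → ℝ) (hρ : ∀ i, ρ i = ∏ j ∈ Finset.range (i + 1), (lam j)⁻¹)
    (P0 : Matrix (Fin n) (Fin n) ℝ) (hP0 : P0.PosDef)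
    (θ0 : Fin n → ℝ)
    (P : ℕ → Matrix (Fin n) (Fin n) ℝ)
    (L : ℕ → Matrix (Fin n) (Fin n) ℝ)
    (θ : ℕ → Fin n → ℝ)
    (hPinit : P 0 = P0) (hθinit : θ 0 = θ0)
    (hL : ∀ i, i ≤ k → L i = (lam i)⁻¹ • P i)
    (hPrec : ∀ i, i ≤ k →
      P (i + 1) = L i - (1 / (1 + φ i ⬝ᵥ (L i *ᵥ φ i))) •
        Matrix.vecMulVec (L i *ᵥ φ i) (Matrix.vecMul (φ i) (L i)))
    (hθrec : ∀ i, i ≤ k →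
      θ (i + 1) = θ i + (y i - θ i ⬝ᵥ φ i) • (P (i + 1) *ᵥ φ i))
    (J : (Fin n → ℝ) → ℝ)
    (hJ : ∀ th : Fin n → ℝ,
      J th = (∑ i ∈ Finset.range (k + 1), (ρ i / ρ k) * (y i - th ⬝ᵥ φ i) ^ 2)
        + (1 / ρ k) * ((th - θ0) ⬝ᵥ (P0⁻¹ *ᵥ (th - θ0)))) :
    (∀ th : Fin n → ℝ, J (θ (k + 1)) ≤ J th) ∧
      (∀ x : Fin n → ℝ, (∀ th, J x ≤ J th) → x = θ (k + 1)) := by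
  classical
  have hlampos : ∀ j, j ≤ k → 0 < lam j := fun j hj => (hlam j hj).1
  have hlamne : ∀ j, j ≤ k → lam j ≠ 0 := fun j hj => ne_of_gt (hlampos j hj)
  set Q : Matrix (Fin n) (Fin n) ℝ := P0⁻¹ with hQdef
  have hQpos : Q.PosDef := hP0.inv
  set S : ℕ → Matrix (Fin n) (Fin n) ℝ := fun i =>
    (∏ j ∈ Finset.range i, lam j) • Q +
      ∑ j ∈ Finset.range i, ((∏ m ∈ Finset.range i, lam m) * ρ j) •
        Matrix.vecMulVec (φ j) (φ j) with hSdef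
  set bb : ℕ → (Fin n → ℝ) := fun i =>
    (∏ j ∈ Finset.range i, lam j) • (Q *ᵥ θ0) +
      ∑ j ∈ Finset.range i, ((∏ m ∈ Finset.range i, lam m) * ρ j * y j) • φ j with hbdef
  have hρpos : ∀ i, i ≤ k → 0 < ρ i := by
    intro i hi
    rw [hρ]
    exact Finset.prod_pos fun j hj =>
      inv_pos.mpr (hlampos j (by simp only [Finset.mem_range] at hj; omega))
  have hprodpos : ∀ i, i ≤ k + 1 → 0 < ∏ j ∈ Finset.range i, lam j := fun i hi =>
    Finset.prod_pos fun j hj =>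
      hlampos j (by simp only [Finset.mem_range] at hj; omega)
  have hcoef1 : ∀ i, i ≤ k → (∏ m ∈ Finset.range (i + 1), lam m) * ρ i = 1 := by
    intro i hi
    rw [hρ, Finset.prod_inv_distrib]
    exact mul_inv_cancel₀ (ne_of_gt (hprodpos (i + 1) (by omega)))
  have hSrec : ∀ i, i ≤ k →
      S (i + 1) = lam i • S i + Matrix.vecMulVec (φ i) (φ i) := by
    intro i hi
    simp only [hSdef]
    rw [Finset.sum_range_succ, hcoef1 i hi, one_smul, Finset.prod_range_succ]
    rw [smul_add, Finset.smul_sum]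
    rw [← add_assoc]
    congr 1
    congr 1
    · rw [smul_smul, mul_comm]
    · exact Finset.sum_congr rfl fun j _ => by rw [smul_smul]; ring_nf
  have hbrec : ∀ i, i ≤ k → bb (i + 1) = lam i • bb i + y i • φ i := by
    intro i hi
    simp only [hbdef]
    rw [Finset.sum_range_succ, hcoef1 i hi, one_mul, Finset.prod_range_succ]
    rw [smul_add, Finset.smul_sum]
    rw [← add_assoc]
    congr 1
    congr 1
    · rw [smul_smul, mul_comm]
    · exact Finset.sum_congr rfl fun j _ => by rw [smul_smul]; ring_nf
  have hSpos : ∀ i, i ≤ k + 1 → (S i).PosDef := by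
    intro i hi
    apply Matrix.PosDef.add_posSemidef (posDef_smul' hQpos (hprodpos i hi))
    apply posSemidef_sum'
    intro j hj
    have hjk : j ≤ k := by simp only [Finset.mem_range] at hj; omega
    exact posSemidef_smul' (posSemidef_vecMulVec_self' _)
      (mul_nonneg (hprodpos i hi).le (hρpos j hjk).le)
  have key : ∀ i, i ≤ k + 1 → P i * S i = 1 ∧ S i *ᵥ θ i = bb i := by
    intro i
    induction i with
    | zero =>
      intro _
      have hS0 : S 0 = Q := by simp [hSdef]
      have hb0 : bb 0 = Q *ᵥ θ0 := by simp [hbdef]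
      constructor
      · rw [hS0, hPinit, hQdef]
        exact Matrix.mul_nonsing_inv _ (isUnit_iff_ne_zero.mpr hP0.det_pos.ne')
      · rw [hS0, hθinit, hb0]
    | succ i ih =>
      intro hik1
      have hik : i ≤ k := by omega
      obtain ⟨hPS, hSθ⟩ := ih (by omega)
      have hSP : S i * P i = 1 := mul_eq_one_comm.mp hPS
      have hPi : (S i)⁻¹ = P i := Matrix.inv_eq_left_inv hPS
      have hPpos : (P i).PosDef := by rw [← hPi]; exact (hSpos i (by omega)).inv
      have hLi : L i = (lam i)⁻¹ • P i := hL i hik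
      have hLpos : (L i).PosDef := by
        rw [hLi]; exact posDef_smul' hPpos (inv_pos.mpr (hlampos i hik))
      have hsnn : (0:ℝ) ≤ φ i ⬝ᵥ (L i *ᵥ φ i) := by
        simpa using hLpos.posSemidef.dotProduct_mulVec_nonneg (φ i)
      set s : ℝ := φ i ⬝ᵥ (L i *ᵥ φ i) with hsdef
      set u : Fin n → ℝ := L i *ᵥ φ i with hudef
      have h1s : (1:ℝ) + s ≠ 0 := by positivity
      have hLt : (L i)ᵀ = L i := by
        rw [← Matrix.conjTranspose_eq_transpose_of_trivial]; exact hLpos.1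
      have hvM : φ i ᵥ* L i = u := by
        conv_lhs => rw [← hLt]
        rw [Matrix.vecMul_transpose]
      have hSu : S i *ᵥ u = (lam i)⁻¹ • φ i := by
        rw [hudef, hLi, Matrix.smul_mulVec, Matrix.mulVec_smul,
          Matrix.mulVec_mulVec, hSP, Matrix.one_mulVec]
      have hSt : (S i)ᵀ = S i := by
        rw [← Matrix.conjTranspose_eq_transpose_of_trivial]; exact (hSpos i (by omega)).1
      have huS : u ᵥ* S i = (lam i)⁻¹ • φ i := by
        conv_lhs => rw [← hSt]
        rw [Matrix.vecMul_transpose, hSu]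
      have e1 : L i * (lam i • S i) = 1 := by
        rw [hLi, Matrix.mul_smul, Matrix.smul_mul, smul_smul,
          mul_inv_cancel₀ (hlamne i hik), one_smul, hPS]
      have e2 : L i * Matrix.vecMulVec (φ i) (φ i) = Matrix.vecMulVec u (φ i) := by
        rw [mul_vecMulVec']
      have e3 : Matrix.vecMulVec u u * (lam i • S i) = Matrix.vecMulVec u (φ i) := by
        rw [Matrix.mul_smul, vecMulVec_mul', huS, vecMulVec_smul_right', smul_smul,
          mul_inv_cancel₀ (hlamne i hik), one_smul]
      have e4 : Matrix.vecMulVec u u * Matrix.vecMulVec (φ i) (φ i) =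
          s • Matrix.vecMulVec u (φ i) := by
        rw [vecMulVec_mul', vecMul_vecMulVec', vecMulVec_smul_right', dotProduct_comm u (φ i),
          ← hsdef]
      have hPS1 : P (i + 1) * S (i + 1) = 1 := by
        rw [hPrec i hik, hSrec i hik, hvM, ← hudef, ← hsdef]
        rw [Matrix.sub_mul, Matrix.mul_add, Matrix.mul_add, Matrix.smul_mul, Matrix.smul_mul,
          e1, e2, e3, e4]
        have hc : (1 / (1 + s)) • Matrix.vecMulVec u (φ i) +
            (1 / (1 + s)) • (s • Matrix.vecMulVec u (φ i)) = Matrix.vecMulVec u (φ i) := by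
          rw [smul_smul, ← add_smul]
          have : 1 / (1 + s) + 1 / (1 + s) * s = 1 := by field_simp
          rw [this, one_smul]
        rw [hc, add_sub_cancel_right]
      refine ⟨hPS1, ?_⟩
      have hSP1 : S (i + 1) * P (i + 1) = 1 := mul_eq_one_comm.mp hPS1
      rw [hθrec i hik, Matrix.mulVec_add, Matrix.mulVec_smul,
        Matrix.mulVec_mulVec, hSP1, Matrix.one_mulVec, hbrec i hik]
      rw [hSrec i hik, Matrix.add_mulVec, Matrix.smul_mulVec, hSθ,
        vecMulVec_mulVec']
      rw [add_assoc]
      congr 1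
      rw [dotProduct_comm (θ i) (φ i), ← add_smul]
      congr 1
      ring
  -- conclusion phase
  obtain ⟨hPSk, hAθ⟩ := key (k + 1) le_rfl
  have hApos : (S (k + 1)).PosDef := hSpos (k + 1) le_rfl
  set θs : Fin n → ℝ := θ (k + 1) with hθsdef
  have hc0 : (∏ j ∈ Finset.range (k + 1), lam j) = (ρ k)⁻¹ := by
    rw [hρ, Finset.prod_inv_distrib, inv_inv]
  have hcoefJ : ∀ i, ρ i / ρ k = (∏ j ∈ Finset.range (k + 1), lam j) * ρ i := by
    intro i; rw [hc0, div_eq_mul_inv, mul_comm]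
  have hco2 : 1 / ρ k = (∏ j ∈ Finset.range (k + 1), lam j) := by
    rw [hc0, one_div]
  set c0 : ℝ := ∏ j ∈ Finset.range (k + 1), lam j with hc0def
  have hsym := sym_dot' hQpos.1
  have hquad : ∀ v : Fin n → ℝ, v ⬝ᵥ (S (k + 1) *ᵥ v) =
      c0 * (v ⬝ᵥ (Q *ᵥ v)) +
        ∑ j ∈ Finset.range (k + 1), (c0 * ρ j) * ((φ j ⬝ᵥ v) * (φ j ⬝ᵥ v)) := by
    intro v
    simp only [hSdef, ← hc0def]
    rw [Matrix.add_mulVec, Matrix.smul_mulVec, sum_mulVec', dotProduct_add,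
      dotProduct_smul, dotProduct_sum', smul_eq_mul]
    congr 1
    refine Finset.sum_congr rfl fun j _ => ?_
    rw [Matrix.smul_mulVec, vecMulVec_mulVec', dotProduct_smul, dotProduct_smul,
      smul_eq_mul, smul_eq_mul, dotProduct_comm v (φ j)]
  have hlin : ∀ v : Fin n → ℝ,
      c0 * (v ⬝ᵥ (Q *ᵥ θs)) +
        ∑ j ∈ Finset.range (k + 1), (c0 * ρ j) * ((φ j ⬝ᵥ θs) * (φ j ⬝ᵥ v)) =
      c0 * (v ⬝ᵥ (Q *ᵥ θ0)) +
        ∑ j ∈ Finset.range (k + 1), (c0 * ρ j) * (y j * (φ j ⬝ᵥ v)) := by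
    intro v
    have h0 : v ⬝ᵥ (S (k + 1) *ᵥ θs) = v ⬝ᵥ bb (k + 1) := by rw [hAθ]
    simp only [hSdef, hbdef, ← hc0def] at h0
    rw [Matrix.add_mulVec, Matrix.smul_mulVec, sum_mulVec', dotProduct_add,
      dotProduct_smul, dotProduct_sum', smul_eq_mul, dotProduct_add, dotProduct_smul,
      dotProduct_sum', smul_eq_mul] at h0
    have hl : ∀ j ∈ Finset.range (k + 1),
        v ⬝ᵥ (((c0 * ρ j) • Matrix.vecMulVec (φ j) (φ j)) *ᵥ θs) =
          (c0 * ρ j) * ((φ j ⬝ᵥ θs) * (φ j ⬝ᵥ v)) := by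
      intro j _
      rw [Matrix.smul_mulVec, vecMulVec_mulVec', dotProduct_smul, dotProduct_smul,
        smul_eq_mul, smul_eq_mul, dotProduct_comm v (φ j)]
    have hr : ∀ j ∈ Finset.range (k + 1),
        v ⬝ᵥ ((c0 * ρ j * y j) • φ j) = (c0 * ρ j) * (y j * (φ j ⬝ᵥ v)) := by
      intro j _
      rw [dotProduct_smul, smul_eq_mul, dotProduct_comm v (φ j)]; ring
    rw [Finset.sum_congr rfl hl, Finset.sum_congr rfl hr] at h0
    rw [hsym v θs, hsym v θ0] at h0
    rw [hsym v θs, hsym v θ0]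
    exact h0
  have hmain : ∀ th : Fin n → ℝ,
      J th = J θs + (th - θs) ⬝ᵥ (S (k + 1) *ᵥ (th - θs)) := by
    intro th
    rw [hJ th, hJ θs, hquad (th - θs)]
    simp only [hcoefJ, hco2, ← hc0def]
    have hd : ∀ v w : Fin n → ℝ, φ 0 = φ 0 := fun _ _ => rfl
    have hq1 : (th - θ0) ⬝ᵥ (Q *ᵥ (th - θ0)) =
        th ⬝ᵥ (Q *ᵥ th) - 2 * (θ0 ⬝ᵥ (Q *ᵥ th)) + θ0 ⬝ᵥ (Q *ᵥ θ0) := by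
      rw [Matrix.mulVec_sub, dotProduct_sub, sub_dotProduct, sub_dotProduct,
        hsym th θ0]
      ring
    have hq2 : (θs - θ0) ⬝ᵥ (Q *ᵥ (θs - θ0)) =
        θs ⬝ᵥ (Q *ᵥ θs) - 2 * (θ0 ⬝ᵥ (Q *ᵥ θs)) + θ0 ⬝ᵥ (Q *ᵥ θ0) := by
      rw [Matrix.mulVec_sub, dotProduct_sub, sub_dotProduct, sub_dotProduct,
        hsym θs θ0]
      ring
    have hq3 : (th - θs) ⬝ᵥ (Q *ᵥ (th - θs)) =
        th ⬝ᵥ (Q *ᵥ th) - 2 * (θs ⬝ᵥ (Q *ᵥ th)) + θs ⬝ᵥ (Q *ᵥ θs) := by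
      rw [Matrix.mulVec_sub, dotProduct_sub, sub_dotProduct, sub_dotProduct,
        hsym th θs]
      ring
    have hlind := hlin (th - θs)
    have hexp1 : (th - θs) ⬝ᵥ (Q *ᵥ θs) = th ⬝ᵥ (Q *ᵥ θs) - θs ⬝ᵥ (Q *ᵥ θs) := by
      rw [sub_dotProduct]
    have hexp2 : (th - θs) ⬝ᵥ (Q *ᵥ θ0) = th ⬝ᵥ (Q *ᵥ θ0) - θs ⬝ᵥ (Q *ᵥ θ0) := by
      rw [sub_dotProduct]
    rw [hexp1, hexp2] at hlind
    have hsum1 : (∑ i ∈ Finset.range (k + 1), c0 * ρ i * (y i - th ⬝ᵥ φ i) ^ 2)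
        = (∑ i ∈ Finset.range (k + 1), c0 * ρ i * (y i - θs ⬝ᵥ φ i) ^ 2)
          + (∑ i ∈ Finset.range (k + 1), (c0 * ρ i) * ((φ i ⬝ᵥ (th - θs)) * (φ i ⬝ᵥ (th - θs))))
          - 2 * ((∑ i ∈ Finset.range (k + 1), (c0 * ρ i) * (y i * (φ i ⬝ᵥ (th - θs))))
              - (∑ i ∈ Finset.range (k + 1), (c0 * ρ i) * ((φ i ⬝ᵥ θs) * (φ i ⬝ᵥ (th - θs))))) := by
      rw [← Finset.sum_sub_distrib, Finset.mul_sum, ← Finset.sum_add_distrib,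
        ← Finset.sum_sub_distrib]
      refine Finset.sum_congr rfl fun i _ => ?_
      have h1 : φ i ⬝ᵥ (th - θs) = φ i ⬝ᵥ th - φ i ⬝ᵥ θs := dotProduct_sub _ _ _
      have h2 : th ⬝ᵥ φ i = φ i ⬝ᵥ th := dotProduct_comm _ _
      have h3 : θs ⬝ᵥ φ i = φ i ⬝ᵥ θs := dotProduct_comm _ _
      rw [h1, h2, h3]
      ring
    rw [hsum1, hq1, hq2, hq3]
    have hsymm1 : θ0 ⬝ᵥ (Q *ᵥ th) = th ⬝ᵥ (Q *ᵥ θ0) := hsym θ0 th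
    have hsymm2 : θ0 ⬝ᵥ (Q *ᵥ θs) = θs ⬝ᵥ (Q *ᵥ θ0) := hsym θ0 θs
    have hsymm3 : θs ⬝ᵥ (Q *ᵥ th) = th ⬝ᵥ (Q *ᵥ θs) := hsym θs th
    rw [hsymm1, hsymm2, hsymm3]
    linarith [hlind]
  have nonneg : ∀ v : Fin n → ℝ, 0 ≤ v ⬝ᵥ (S (k + 1) *ᵥ v) := by
    intro v
    simpa using hApos.posSemidef.dotProduct_mulVec_nonneg v
  have pos : ∀ v : Fin n → ℝ, v ≠ 0 → 0 < v ⬝ᵥ (S (k + 1) *ᵥ v) := by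
    intro v hv
    simpa using hApos.dotProduct_mulVec_pos hv
  constructor
  · intro th
    rw [hmain th]
    linarith [nonneg (th - θs)]
  · intro x hx
    by_contra hne
    have h1 : x - θs ≠ 0 := sub_ne_zero.mpr hne
    have h2 : J x ≤ J θs := hx θs
    rw [hmain x] at h2
    linarith [pos _ h1]
end

section
/- Let n ≥ 1, let R_0, R_∞ ∈ ℝ^{n×n} be symmetric positive definite, let (λ_k)_{k≥0} be a sequence in (0,1], let (φ_k)_{k≥0} be a sequence in ℝ^n, and define recursively R_{k+1} = λ_k R_k + (1 − λ_k) R_∞ + φ_k φ_kᵀ. Then for every k ≥ 0, R_k ⪰ α_k R_0 + (1 − α_k) R_∞ in the Loewner (positive-semidefinite) order, where α_k = ∏_{j=0}^{k−1} λ_j (with α_0 = 1). -/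
open Matrix

lemma vecMulVec_self_posSemidef {n : ℕ} (v : Fin n → ℝ) :
    (Matrix.vecMulVec v v).PosSemidef := by
  rw [Matrix.posSemidef_iff_dotProduct_mulVec]
  constructor
  · ext i j
    simp [Matrix.vecMulVec_apply, Matrix.conjTranspose_apply, mul_comm]
  · intro x
    have h : Star.star x ⬝ᵥ (Matrix.vecMulVec v v *ᵥ x) = (v ⬝ᵥ x) * (v ⬝ᵥ x) := by
      simp only [dotProduct, Matrix.mulVec, Matrix.vecMulVec_apply,
        Finset.sum_mul, Finset.mul_sum, star_trivial]
      rw [Finset.sum_comm]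
      exact Finset.sum_congr rfl fun i _ => Finset.sum_congr rfl fun j _ => by ring
    rw [h]
    exact mul_self_nonneg _

lemma psd_smul_nonneg {n : ℕ} {A : Matrix (Fin n) (Fin n) ℝ} {c : ℝ}
    (hc : 0 ≤ c) (hA : A.PosSemidef) : (c • A).PosSemidef := by
  rw [Matrix.posSemidef_iff_dotProduct_mulVec]
  constructor
  · unfold Matrix.IsHermitian
    rw [Matrix.conjTranspose_smul, hA.1]
    simp
  · intro x
    have := hA.dotProduct_mulVec_nonneg x
    simpa [Matrix.smul_mulVec, dotProduct_smul] using
      mul_nonneg hc this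

/-- Step-dependent Loewner lower bound for the exponential-resetting RLS
information matrix: `R_k ⪰ α_k R_0 + (1 − α_k) R_∞` with
`α_k = ∏_{j<k} λ_j`. -/
theorem er_rls_information_matrix_lower_bound
    (n : ℕ) (hn : 1 ≤ n)
    (Rinf : Matrix (Fin n) (Fin n) ℝ) (hRinf : Rinf.PosDef)
    (lam : ℕ → ℝ) (hlam : ∀ k, lam k ∈ Set.Ioc (0 : ℝ) 1)
    (φ : ℕ → Fin n → ℝ)
    (R : ℕ → Matrix (Fin n) (Fin n) ℝ)
    (hR0 : (R 0).PosDef)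
    (hrec : ∀ k, R (k + 1) = lam k • R k + (1 - lam k) • Rinf +
      Matrix.vecMulVec (φ k) (φ k))
    (α : ℕ → ℝ) (hα : ∀ k, α k = ∏ j ∈ Finset.range k, lam j) :
    ∀ k, (R k - (α k • R 0 + (1 - α k) • Rinf)).PosSemidef := by
  intro k
  induction k with
  | zero =>
    have : R 0 - (α 0 • R 0 + (1 - α 0) • Rinf) = 0 := by
      rw [hα 0]
      simp
    rw [this]
    exact Matrix.PosSemidef.zero
  | succ k ih =>
    have hαs : α (k + 1) = lam k * α k := by
      rw [hα, hα, Finset.prod_range_succ, mul_comm]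
    have key : R (k + 1) - (α (k + 1) • R 0 + (1 - α (k + 1)) • Rinf) =
        lam k • (R k - (α k • R 0 + (1 - α k) • Rinf)) +
        Matrix.vecMulVec (φ k) (φ k) := by
      rw [hrec k, hαs]
      ext i j
      simp [Matrix.add_apply, Matrix.sub_apply, Matrix.smul_apply]
      ring
    rw [key]
    exact (psd_smul_nonneg (le_of_lt (hlam k).1) ih).add
      (vecMulVec_self_posSemidef _)
end
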